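/- arXiv:2309.05288 — 2 statements merged into one kernel-verified Lean document; each statement's English description precedes it below -/
import Mathlib

section
/- Let F be a finite field of characteristic p, let C be a linear code of length n over F with a permutation automorphism σ, and suppose every cycle of σ has length congruent to l modulo p, where l ≢ 0 (mod p). If C is self-dual with respect to the Euclidean inner product, then the projection code C_π = π(F_σ(C)) is also self-dual. -/
open Finset

/-- The action of a permutation `σ` on vectors by permuting coordinates: `(vσ) i = v (σ i)`. -/
def permAct {F : Type*} {n : ℕ} (σ : Equiv.Perm (Fin n)) (v : Fin n → F) : Fin n → F :=
  fun i => v (σ i)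

open Classical in
/-- The cycle (orbit) of `σ` containing the coordinate `i`, as a `Finset`
(fixed points are counted as cycles of length 1). -/
noncomputable def orbitOf {n : ℕ} (σ : Equiv.Perm (Fin n)) (i : Fin n) : Finset (Fin n) :=
  Finset.univ.filter (fun j => σ.SameCycle i j)

/-- The Euclidean inner product `u·v = ∑ i, u i * v i`. -/
def eInner {F : Type*} [Field F] {ι : Type*} [Fintype ι] (u v : ι → F) : F :=
  ∑ i, u i * v i

/-- The Euclidean dual of a set of vectors. -/
def dualSet {F : Type*} [Field F] {ι : Type*} [Fintype ι] (S : Set (ι → F)) : Set (ι → F) :=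
  {u | ∀ v ∈ S, eInner u v = 0}

/-- A set of vectors is self-orthogonal if it is contained in its dual. -/
def IsSelfOrthogonalSet {F : Type*} [Field F] {ι : Type*} [Fintype ι] (S : Set (ι → F)) : Prop :=
  S ⊆ dualSet S

/-- A set of vectors is self-dual if it equals its dual. -/
def IsSelfDualSet {F : Type*} [Field F] {ι : Type*} [Fintype ι] (S : Set (ι → F)) : Prop :=
  S = dualSet S

/-- A set of vectors is LCD (linear complementary dual) if it meets its dual only in `0`. -/
def IsLCDSet {F : Type*} [Field F] {ι : Type*} [Fintype ι] (S : Set (ι → F)) : Prop :=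
  S ∩ dualSet S = {0}

/-- The fixed subcode `F_σ(C) = {v ∈ C : vσ = v}`. -/
def fixedCode {F : Type*} [Field F] {n : ℕ} (σ : Equiv.Perm (Fin n))
    (C : Submodule F (Fin n → F)) : Set (Fin n → F) :=
  {v | v ∈ C ∧ permAct σ v = v}

/-- The subcode `E_σ(C) = {v ∈ C : the sum of the coordinates of v over each cycle of σ is 0}`. -/
def evenCode {F : Type*} [Field F] {n : ℕ} (σ : Equiv.Perm (Fin n))
    (C : Submodule F (Fin n → F)) : Set (Fin n → F) :=
  {v | v ∈ C ∧ ∀ i : Fin n, ∑ j ∈ orbitOf σ i, v j = 0}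

/-- The setoid on coordinates whose classes are the cycles (orbits) of `σ`. -/
def cycleSetoid {n : ℕ} (σ : Equiv.Perm (Fin n)) : Setoid (Fin n) :=
  ⟨σ.SameCycle, ⟨fun x => Equiv.Perm.SameCycle.refl σ x, fun h => h.symm, fun h h' => h.trans h'⟩⟩

/-- The set of cycles of `σ` (fixed points counted as cycles of length 1); if `σ` has `s`
cycles then `Cycles σ → F` is a copy of `F^s`. -/
abbrev Cycles {n : ℕ} (σ : Equiv.Perm (Fin n)) : Type :=
  Quotient (cycleSetoid σ)

noncomputable instance {n : ℕ} (σ : Equiv.Perm (Fin n)) : Fintype (Cycles σ) :=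
  @Fintype.ofFinite _ (Quotient.finite _)

/-- The projection `π` picking one coordinate from each cycle of `σ`; on a `σ`-fixed vector
this is the common value of the vector on each cycle. -/
noncomputable def projPi {F : Type*} {n : ℕ} (σ : Equiv.Perm (Fin n)) (v : Fin n → F) :
    Cycles σ → F :=
  fun c => v c.out

section aux
variable {n : ℕ} (σ : Equiv.Perm (Fin n))

lemma mem_orbitOf {σ : Equiv.Perm (Fin n)} {i j : Fin n} :
    j ∈ orbitOf σ i ↔ σ.SameCycle i j := by
  classical
  simp [orbitOf]

lemma orbitOf_apply (i : Fin n) : orbitOf σ (σ i) = orbitOf σ i := by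
  ext j; simp [mem_orbitOf, Equiv.Perm.sameCycle_apply_left]

lemma mem_periodicPts (i : Fin n) : i ∈ Function.periodicPts σ := by
  refine ⟨orderOf σ, orderOf_pos σ, ?_⟩
  show (⇑σ)^[orderOf σ] i = i
  simp [Equiv.Perm.iterate_eq_pow, pow_orderOf_eq_one]

lemma orbitOf_eq_image (i : Fin n) :
    orbitOf σ i = (Finset.range (Function.minimalPeriod σ i)).image (fun k => (σ ^ k) i) := by
  have dpos : 0 < Function.minimalPeriod σ i :=
    Function.minimalPeriod_pos_of_mem_periodicPts (mem_periodicPts σ i)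
  ext j
  simp only [mem_orbitOf, Finset.mem_image, Finset.mem_range]
  constructor
  · intro hij
    obtain ⟨k, -, rfl⟩ := hij.exists_pow_eq'
    refine ⟨k % Function.minimalPeriod σ i, Nat.mod_lt _ dpos, ?_⟩
    show (⇑σ)^[k % Function.minimalPeriod (⇑σ) i] i = (⇑σ)^[k] i
    exact Function.iterate_mod_minimalPeriod_eq
  · rintro ⟨k, -, rfl⟩
    exact ⟨(k : ℤ), by simp⟩

lemma orbitOf_card (i : Fin n) : (orbitOf σ i).card = Function.minimalPeriod σ i := by
  rw [orbitOf_eq_image, Finset.card_image_of_injOn, Finset.card_range]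
  intro a ha b hb hab
  exact Function.iterate_injOn_Iio_minimalPeriod (by simpa using ha) (by simpa using hb) hab

lemma sum_orbitOf {M : Type*} [AddCommMonoid M] (i : Fin n) (f : Fin n → M) :
    ∑ j ∈ orbitOf σ i, f j = ∑ k ∈ Finset.range (Function.minimalPeriod σ i), f ((σ ^ k) i) := by
  rw [orbitOf_eq_image, Finset.sum_image]
  intro a ha b hb hab
  exact Function.iterate_injOn_Iio_minimalPeriod (by simpa using ha) (by simpa using hb) hab

lemma fixed_constant {F : Type*} {σ : Equiv.Perm (Fin n)} {v : Fin n → F}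
    (hv : permAct σ v = v) : ∀ {i j : Fin n}, σ.SameCycle i j → v i = v j := by
  have h1 : ∀ x, v (σ x) = v x := fun x => congrFun hv x
  have hpow : ∀ (k : ℕ) (x : Fin n), v ((σ ^ k) x) = v x := by
    intro k
    induction k with
    | zero => simp
    | succ k ih =>
      intro x
      rw [pow_succ, Equiv.Perm.mul_apply, ih, h1]
  intro i j hij
  obtain ⟨k, -, rfl⟩ := hij.exists_pow_eq'
  exact (hpow k i).symm

lemma sum_eq_sum_cycles {M : Type*} [AddCommMonoid M] (f : Fin n → M) :
    ∑ i, f i = ∑ c : Cycles σ, ∑ i ∈ orbitOf σ (Quotient.out c), f i := by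
  classical
  rw [← Finset.sum_fiberwise Finset.univ (fun i => Quotient.mk (cycleSetoid σ) i) f]
  refine Finset.sum_congr rfl fun c _ => Finset.sum_congr ?_ (fun _ _ => rfl)
  ext j
  simp only [Finset.mem_filter, Finset.mem_univ, true_and, mem_orbitOf]
  constructor
  · rintro rfl
    exact @Quotient.exact _ (cycleSetoid σ) _ j (Quotient.out_eq _)
  · intro hcj
    calc Quotient.mk (cycleSetoid σ) j
        = Quotient.mk (cycleSetoid σ) (Quotient.out c) := Quotient.sound hcj.symm
      _ = c := Quotient.out_eq c

lemma sum_block {M : Type*} [AddCommMonoid M] (g : ℕ → M) (d t : ℕ)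
    (hg : ∀ k, g (k + d) = g k) :
    ∑ k ∈ Finset.range (d * t), g k = t • ∑ k ∈ Finset.range d, g k := by
  have hg' : ∀ (m k : ℕ), g (k + d * m) = g k := by
    intro m
    induction m with
    | zero => simp
    | succ m ih =>
      intro k
      rw [Nat.mul_succ, ← Nat.add_assoc, hg, ih]
  induction t with
  | zero => simp
  | succ t ih =>
    rw [Nat.mul_succ, Finset.sum_range_add, ih, succ_nsmul]
    congr 1
    exact Finset.sum_congr rfl fun k _ => by rw [Nat.add_comm, hg']

end aux

/-- Let `C` be a linear code over a finite field of characteristic `p` with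
a permutation automorphism `σ`, all of whose cycles have length congruent to `l ≢ 0 (mod p)`.
If `C` is self-dual with respect to the Euclidean inner product, then so is the projection
code `C_π = π(F_σ(C))`. -/
theorem proj_code_of_code {F : Type*} [Field F] [Fintype F] (p : ℕ) [CharP F p]
    {n : ℕ} (σ : Equiv.Perm (Fin n)) (C : Submodule F (Fin n → F))
    (hC : ∀ v, v ∈ C ↔ permAct σ v ∈ C)
    (l : ℕ) (hl : ¬ l ≡ 0 [MOD p])
    (hcyc : ∀ i : Fin n, (orbitOf σ i).card ≡ l [MOD p])
    (h : IsSelfDualSet (C : Set (Fin n → F))) :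
    IsSelfDualSet (projPi σ '' fixedCode σ C) := by
  classical
  have hp : p.Prime := CharP.char_is_prime F p
  have hlF : (l : F) ≠ 0 := by
    rw [Ne, CharP.cast_eq_zero_iff F p]
    exact fun hdvd => hl ((Nat.modEq_zero_iff_dvd).mpr hdvd)
  have hdF : ∀ i : Fin n, (((orbitOf σ i).card : F)) = (l : F) := fun i =>
    CharP.natCast_eq_natCast' F p (hcyc i)
  set d : Fin n → ℕ := fun i => Function.minimalPeriod σ i with hddef
  have hdcard : ∀ i, (orbitOf σ i).card = d i := fun i => orbitOf_card σ i
  have hdF' : ∀ i, ((d i : F)) = (l : F) := fun i => by rw [← hdcard i]; exact hdF i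
  have hdne : ∀ i, (d i : F) ≠ 0 := fun i => by rw [hdF' i]; exact hlF
  have hpd : ∀ i, ¬ p ∣ d i := fun i hdvd =>
    hdne i ((CharP.cast_eq_zero_iff F p _).mpr hdvd)
  set m : ℕ := Finset.univ.lcm d with hmdef
  have hdm : ∀ i, d i ∣ m := fun i => Finset.dvd_lcm (Finset.mem_univ i)
  have hpm : ¬ p ∣ m := by
    intro hpm
    have h1 : m ∣ ∏ i, d i :=
      Finset.lcm_dvd fun i _ => Finset.dvd_prod_of_mem d (Finset.mem_univ i)
    obtain ⟨i, -, hi⟩ := hp.prime.exists_mem_finset_dvd (hpm.trans h1)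
    exact hpd i hi
  -- the averaging map
  have avg : ∀ v, v ∈ C →
      (fun i => (d i : F)⁻¹ * ∑ j ∈ orbitOf σ i, v j) ∈ fixedCode σ C := by
    intro v hv
    have hterm : ∀ k : ℕ, (fun i : Fin n => v ((σ ^ k) i)) ∈ C := by
      intro k
      induction k with
      | zero => simpa using hv
      | succ k ih =>
        have h2 := (hC _).mp ih
        have heq : (fun i : Fin n => v ((σ ^ (k + 1)) i))
            = permAct σ (fun i : Fin n => v ((σ ^ k) i)) := by
          funext i
          simp [permAct, pow_succ, Equiv.Perm.mul_apply]
        rw [heq]; exact h2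
    constructor
    · have hmem : ((m : F)⁻¹ • ∑ k ∈ Finset.range m, fun i : Fin n => v ((σ ^ k) i)) ∈ C :=
        Submodule.smul_mem _ _ (Submodule.sum_mem _ fun k _ => hterm k)
      have heq : (fun i => (d i : F)⁻¹ * ∑ j ∈ orbitOf σ i, v j)
          = (m : F)⁻¹ • ∑ k ∈ Finset.range m, fun i : Fin n => v ((σ ^ k) i) := by
        funext i
        obtain ⟨t, ht⟩ := hdm i
        have htF : (t : F) ≠ 0 := by
          rw [Ne, CharP.cast_eq_zero_iff F p]
          intro hpt
          exact hpm (hpt.trans ⟨d i, by rw [ht]; ring⟩)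
        have hdi : (σ ^ d i) i = i := by
          show (⇑σ)^[d i] i = i
          exact Function.isPeriodicPt_minimalPeriod σ i
        have hper : ∀ k, v ((σ ^ (k + d i)) i) = v ((σ ^ k) i) := by
          intro k
          rw [pow_add, Equiv.Perm.mul_apply, hdi]
        have hblock : ∑ k ∈ Finset.range m, v ((σ ^ k) i)
            = t • ∑ k ∈ Finset.range (d i), v ((σ ^ k) i) := by
          rw [ht]; exact sum_block _ _ _ hper
        have horb : ∑ j ∈ orbitOf σ i, v j = ∑ k ∈ Finset.range (d i), v ((σ ^ k) i) :=
          sum_orbitOf σ i v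
        simp only [Pi.smul_apply, Finset.sum_apply, smul_eq_mul]
        rw [hblock, horb, nsmul_eq_mul, ht, Nat.cast_mul, mul_inv, mul_assoc,
          inv_mul_cancel_left₀ htF]
      rw [heq]; exact hmem
    · funext i
      show (d (σ i) : F)⁻¹ * ∑ j ∈ orbitOf σ (σ i), v j = _
      rw [orbitOf_apply, ← hdcard (σ i), orbitOf_apply, hdcard i]
  -- inner product formula for a fixed first argument
  have inner_fixed : ∀ u u' : Fin n → F, permAct σ u = u →
      eInner u u' = ∑ c : Cycles σ,
        u (Quotient.out c) * ∑ j ∈ orbitOf σ (Quotient.out c), u' j := by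
    intro u u' hu
    rw [eInner, sum_eq_sum_cycles σ]
    refine Finset.sum_congr rfl fun c _ => ?_
    rw [Finset.mul_sum]
    refine Finset.sum_congr rfl fun j hj => ?_
    rw [fixed_constant hu (mem_orbitOf.mp hj)]
  have orbit_sum_fixed : ∀ u' : Fin n → F, permAct σ u' = u' → ∀ c : Cycles σ,
      ∑ j ∈ orbitOf σ (Quotient.out c), u' j = (l : F) * u' (Quotient.out c) := by
    intro u' hu' c
    rw [Finset.sum_congr rfl
      (fun j hj => (fixed_constant hu' (mem_orbitOf.mp hj)).symm :
        ∀ j ∈ orbitOf σ (Quotient.out c), u' j = u' (Quotient.out c)),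
      Finset.sum_const, nsmul_eq_mul, hdF (Quotient.out c)]
  apply Set.Subset.antisymm
  · rintro w ⟨u, hu, rfl⟩ w' ⟨u', hu', rfl⟩
    have hud : u ∈ dualSet (C : Set (Fin n → F)) := by rw [← h]; exact hu.1
    have h0 : eInner u u' = 0 := hud u' hu'.1
    have hc : eInner u u' = (l : F) * eInner (projPi σ u) (projPi σ u') := by
      rw [inner_fixed u u' hu.2]
      simp only [eInner, projPi, Finset.mul_sum]
      refine Finset.sum_congr rfl fun c _ => ?_
      rw [← Finset.mul_sum, orbit_sum_fixed u' hu'.2 c]; ring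
    rw [hc] at h0
    exact (mul_eq_zero.mp h0).resolve_left hlF
  · intro w hw
    set wh : Fin n → F := fun i => w (Quotient.mk (cycleSetoid σ) i) with hwhdef
    have hfix : permAct σ wh = wh := by
      funext i
      show w (Quotient.mk (cycleSetoid σ) (σ i)) = w (Quotient.mk (cycleSetoid σ) i)
      exact congrArg w (Quotient.sound
        (Equiv.Perm.sameCycle_apply_left.mpr (Equiv.Perm.SameCycle.refl σ i)))
    have hmem : wh ∈ (C : Set (Fin n → F)) := by
      rw [h]
      intro v hv
      set u : Fin n → F := fun i => (d i : F)⁻¹ * ∑ j ∈ orbitOf σ i, v j with hudef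
      have hu := avg v hv
      have hkey : eInner wh v = (l : F) * eInner w (projPi σ u) := by
        rw [inner_fixed wh v hfix]
        simp only [eInner, Finset.mul_sum]
        refine Finset.sum_congr rfl fun c _ => ?_
        have h1 : wh (Quotient.out c) = w c := congrArg w (Quotient.out_eq c)
        have h2 : ∑ j ∈ orbitOf σ (Quotient.out c), v j = (l : F) * projPi σ u c := by
          show _ = (l : F) * ((d (Quotient.out c) : F)⁻¹ * _)
          rw [hdF' (Quotient.out c), ← mul_assoc, mul_inv_cancel₀ hlF, one_mul]
        rw [h1, ← Finset.mul_sum, h2]; ring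
      rw [hkey, hw (projPi σ u) ⟨u, hu, rfl⟩, mul_zero]
    refine ⟨wh, ⟨hmem, hfix⟩, ?_⟩
    funext c
    show wh (Quotient.out c) = w c
    exact congrArg w (Quotient.out_eq c)
end

section
/- Let F be a finite field of characteristic p with p not dividing m, and let C be a linear code of length n = cm + f over F with a permutation automorphism σ of type m-(c,f) (c disjoint m-cycles and f fixed points). Then C is a Euclidean LCD code if and only if both F_σ(C) and E_σ(C) are Euclidean LCD codes. -/
open Finset

/-- The permutation action of a permutation of type `m-(c,f)` (c disjoint `m`-cycles and `f`
fixed points) on `F^{cm+f}`, where coordinates are indexed by `(Fin c × ZMod m) ⊕ Fin f`. -/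
def aqcShift {F : Type*} {c m f : ℕ} (v : (Fin c × ZMod m) ⊕ Fin f → F) :
    (Fin c × ZMod m) ⊕ Fin f → F :=
  fun x => match x with
  | .inl ij => v (.inl (ij.1, ij.2 + 1))
  | .inr j => v (.inr j)

/-- The projection `π : F^{cm+f} → F^{c+f}`; on a `σ`-fixed vector it returns the common value
on each cycle (fixed points counted as cycles of length 1). -/
def aqcPi {F : Type*} {c m f : ℕ} (v : (Fin c × ZMod m) ⊕ Fin f → F) :
    Fin c ⊕ Fin f → F :=
  fun x => match x with
  | .inl i => v (.inl (i, 0))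
  | .inr j => v (.inr j)

/-- The fixed subcode `F_σ(C)` for a permutation of type `m-(c,f)`. -/
def aqcFixedCode {F : Type*} [Field F] {c m f : ℕ}
    (C : Submodule F ((Fin c × ZMod m) ⊕ Fin f → F)) : Set ((Fin c × ZMod m) ⊕ Fin f → F) :=
  {v | v ∈ C ∧ aqcShift v = v}

/-- The subcode `E_σ(C)` for a permutation of type `m-(c,f)`: codewords whose coordinate sum
over every cycle (including the singleton cycles at the fixed points) vanishes. -/
def aqcEvenCode {F : Type*} [Field F] {c m f : ℕ} [NeZero m]
    (C : Submodule F ((Fin c × ZMod m) ⊕ Fin f → F)) : Set ((Fin c × ZMod m) ⊕ Fin f → F) :=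
  {v | v ∈ C ∧ (∀ i : Fin c, ∑ j : ZMod m, v (.inl (i, j)) = 0) ∧ (∀ j : Fin f, v (.inr j) = 0)}

section Aux

set_option linter.unusedSectionVars false

variable {F : Type*} [Field F] {c m f : ℕ} [NeZero m]

/-- The averaging projector onto the fixed space. -/
def aqcP (v : (Fin c × ZMod m) ⊕ Fin f → F) :
    (Fin c × ZMod m) ⊕ Fin f → F :=
  fun x => match x with
  | .inl ij => (m : F)⁻¹ * ∑ k : ZMod m, v (.inl (ij.1, k))
  | .inr j => v (.inr j)

lemma aqc_sum_range (g : ZMod m → F) :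
    ∑ k ∈ Finset.range m, g (k : ZMod m) = ∑ t : ZMod m, g t := by
  refine Finset.sum_nbij' (i := fun k => ((k : ZMod m))) (j := fun t => t.val) ?_ ?_ ?_ ?_ ?_
  · intro a ha; exact Finset.mem_univ _
  · intro a ha; exact Finset.mem_range.mpr (ZMod.val_lt a)
  · intro a ha; exact ZMod.val_cast_of_lt (Finset.mem_range.mp ha)
  · intro a ha; exact ZMod.natCast_rightInverse a
  · intro a ha; rfl

lemma aqcShift_iter_inl (v : (Fin c × ZMod m) ⊕ Fin f → F) (k : ℕ) (i : Fin c) (j : ZMod m) :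
    (aqcShift^[k] v) (.inl (i, j)) = v (.inl (i, j + (k : ℕ))) := by
  induction k generalizing j with
  | zero => simp
  | succ n ih =>
    rw [Function.iterate_succ_apply']
    show (aqcShift^[n] v) (.inl (i, j + 1)) = _
    rw [ih]
    congr 1
    push_cast
    ring_nf

lemma aqcShift_iter_inr (v : (Fin c × ZMod m) ⊕ Fin f → F) (k : ℕ) (j : Fin f) :
    (aqcShift^[k] v) (.inr j) = v (.inr j) := by
  induction k with
  | zero => rfl
  | succ n ih => rw [Function.iterate_succ_apply']; exact ih

lemma aqcP_eq_smul_sum (hmF : (m : F) ≠ 0)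
    (v : (Fin c × ZMod m) ⊕ Fin f → F) :
    aqcP v = (m : F)⁻¹ • ∑ k ∈ Finset.range m, aqcShift^[k] v := by
  funext x
  cases x with
  | inl ij =>
    obtain ⟨i, j⟩ := ij
    show (m : F)⁻¹ * _ = (m : F)⁻¹ * ((∑ k ∈ Finset.range m, aqcShift^[k] v) (.inl (i, j)))
    congr 1
    rw [Finset.sum_apply]
    rw [show (∑ k ∈ Finset.range m, (aqcShift^[k] v) (Sum.inl (i, j)))
        = ∑ k ∈ Finset.range m, v (.inl (i, j + (k : ZMod m))) from
      Finset.sum_congr rfl fun k _ => aqcShift_iter_inl v k i j]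
    rw [aqc_sum_range (fun t => v (.inl (i, j + t)))]
    exact (Equiv.sum_comp (Equiv.addLeft j) (fun t => v (.inl (i, t)))).symm
  | inr j =>
    show v (.inr j) = (m : F)⁻¹ * ((∑ k ∈ Finset.range m, aqcShift^[k] v) (.inr j))
    rw [Finset.sum_apply]
    rw [show (∑ k ∈ Finset.range m, (aqcShift^[k] v) (Sum.inr j))
        = ∑ _k ∈ Finset.range m, v (.inr j) from
      Finset.sum_congr rfl fun k _ => aqcShift_iter_inr v k j]
    rw [Finset.sum_const, Finset.card_range, nsmul_eq_mul, ← mul_assoc,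
      inv_mul_cancel₀ hmF, one_mul]

lemma aqcShift_mem_iter (C : Submodule F ((Fin c × ZMod m) ⊕ Fin f → F))
    (hC : ∀ v, v ∈ C ↔ aqcShift v ∈ C) {v} (hv : v ∈ C) (k : ℕ) :
    aqcShift^[k] v ∈ C := by
  induction k with
  | zero => exact hv
  | succ n ih => rw [Function.iterate_succ_apply']; exact (hC _).mp ih

lemma aqcP_mem (hmF : (m : F) ≠ 0)
    (C : Submodule F ((Fin c × ZMod m) ⊕ Fin f → F))
    (hC : ∀ v, v ∈ C ↔ aqcShift v ∈ C) {v} (hv : v ∈ C) : aqcP v ∈ C := by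
  rw [aqcP_eq_smul_sum hmF]
  exact C.smul_mem _ (Submodule.sum_mem C fun k _ => aqcShift_mem_iter C hC hv k)

lemma aqcShift_aqcP (v : (Fin c × ZMod m) ⊕ Fin f → F) :
    aqcShift (aqcP v) = aqcP v := by
  funext x; cases x with
  | inl ij => rfl
  | inr j => rfl

lemma aqc_fixed_const {u : (Fin c × ZMod m) ⊕ Fin f → F} (hu : aqcShift u = u)
    (i : Fin c) (j : ZMod m) : u (.inl (i, j)) = u (.inl (i, 0)) := by
  have key : ∀ k : ℕ, u (.inl (i, (k : ZMod m))) = u (.inl (i, 0)) := by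
    intro k
    induction k with
    | zero => norm_num
    | succ n ih =>
      have := congrFun hu (.inl (i, (n : ZMod m)))
      simp only [aqcShift] at this
      rw [← ih, ← this]
      push_cast
      ring_nf
  have := key j.val
  rwa [ZMod.natCast_rightInverse j] at this

lemma aqcP_sub_even_inl (hmF : (m : F) ≠ 0)
    (v : (Fin c × ZMod m) ⊕ Fin f → F) (i : Fin c) :
    ∑ j : ZMod m, (v - aqcP v) (.inl (i, j)) = 0 := by
  simp only [Pi.sub_apply, Finset.sum_sub_distrib]
  have : ∑ j : ZMod m, aqcP v (Sum.inl (i, j))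
      = ∑ j : ZMod m, (m : F)⁻¹ * ∑ k : ZMod m, v (.inl (i, k)) := rfl
  rw [this, Finset.sum_const, Finset.card_univ, ZMod.card, nsmul_eq_mul, ← mul_assoc,
    mul_inv_cancel₀ hmF, one_mul, sub_self]

lemma aqcP_sub_even_inr (v : (Fin c × ZMod m) ⊕ Fin f → F) (j : Fin f) :
    (v - aqcP v) (.inr j) = 0 := by
  simp [aqcP]

lemma eInner_sum_type {u v : (Fin c × ZMod m) ⊕ Fin f → F} :
    eInner u v = (∑ ij : Fin c × ZMod m, u (.inl ij) * v (.inl ij))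
      + ∑ j : Fin f, u (.inr j) * v (.inr j) := by
  simp [eInner, Fintype.sum_sum_type]

/-- A fixed vector is orthogonal to an even-type vector. -/
lemma aqc_orth {u w : (Fin c × ZMod m) ⊕ Fin f → F} (hu : aqcShift u = u)
    (hw1 : ∀ i : Fin c, ∑ j : ZMod m, w (.inl (i, j)) = 0)
    (hw2 : ∀ j : Fin f, w (.inr j) = 0) : eInner u w = 0 := by
  rw [eInner_sum_type]
  have h2 : ∑ j : Fin f, u (.inr j) * w (.inr j) = 0 := by
    simp [hw2]
  rw [h2, add_zero]
  rw [Fintype.sum_prod_type]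
  apply Finset.sum_eq_zero
  intro i _
  calc ∑ j : ZMod m, u (.inl (i, j)) * w (.inl (i, j))
      = ∑ j : ZMod m, u (.inl (i, 0)) * w (.inl (i, j)) := by
        exact Finset.sum_congr rfl fun j _ => by rw [aqc_fixed_const hu i j]
    _ = u (.inl (i, 0)) * ∑ j : ZMod m, w (.inl (i, j)) := by rw [Finset.mul_sum]
    _ = 0 := by rw [hw1 i, mul_zero]

lemma eInner_comm {ι : Type*} [Fintype ι] (u v : ι → F) : eInner u v = eInner v u := by
  simp [eInner, mul_comm]

lemma eInner_sub_left {ι : Type*} [Fintype ι] (u w v : ι → F) :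
    eInner (u - w) v = eInner u v - eInner w v := by
  simp [eInner, sub_mul, Finset.sum_sub_distrib]

lemma eInner_sub_right {ι : Type*} [Fintype ι] (u w v : ι → F) :
    eInner u (w - v) = eInner u w - eInner u v := by
  simp [eInner, mul_sub, Finset.sum_sub_distrib]

lemma eInner_zero_left {ι : Type*} [Fintype ι] (v : ι → F) : eInner 0 v = 0 := by
  simp [eInner]

end Aux

/-- Let `F` be a finite field of characteristic `p` with `p ∤ m`, and let
`C` be a linear code of length `n = cm + f` over `F` with a permutation automorphism `σ` of
type `m-(c,f)`. Then `C` is Euclidean LCD if and only if both `F_σ(C)` and `E_σ(C)`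
are Euclidean LCD. -/
theorem aqc_code_iff_fixed_and_even {F : Type*} [Field F] [Fintype F] (p : ℕ) [CharP F p]
    {c m f : ℕ} [NeZero m] (hm : ¬ p ∣ m)
    (C : Submodule F ((Fin c × ZMod m) ⊕ Fin f → F))
    (hC : ∀ v, v ∈ C ↔ aqcShift v ∈ C) :
    IsLCDSet (C : Set ((Fin c × ZMod m) ⊕ Fin f → F)) ↔
      (IsLCDSet (aqcFixedCode C) ∧ IsLCDSet (aqcEvenCode C)) := by
  have hmF : (m : F) ≠ 0 := fun h => hm ((CharP.cast_eq_zero_iff F p m).mp h)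
  have hzero_fix : (0 : (Fin c × ZMod m) ⊕ Fin f → F) ∈ aqcFixedCode C :=
    ⟨C.zero_mem, by funext x; cases x <;> rfl⟩
  have hzero_even : (0 : (Fin c × ZMod m) ⊕ Fin f → F) ∈ aqcEvenCode C :=
    ⟨C.zero_mem, fun i => by simp, fun j => rfl⟩
  have hzero_dual : ∀ S : Set ((Fin c × ZMod m) ⊕ Fin f → F), (0 : _) ∈ dualSet S :=
    fun S v _ => eInner_zero_left v
  constructor
  · rintro hLCD
    constructor
    · -- F_σ(C) is LCD
      unfold IsLCDSet
      ext u
      simp only [Set.mem_inter_iff, Set.mem_singleton_iff]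
      constructor
      · rintro ⟨⟨huC, hufix⟩, hud⟩
        have hmem : u ∈ (C : Set _) ∩ dualSet (C : Set _) := by
          refine ⟨huC, fun v hv => ?_⟩
          have h1 : eInner u (aqcP v) = 0 :=
            hud _ ⟨aqcP_mem hmF C hC hv, aqcShift_aqcP v⟩
          have h2 : eInner u (v - aqcP v) = 0 :=
            aqc_orth hufix (aqcP_sub_even_inl hmF v) (aqcP_sub_even_inr v)
          have h3 := eInner_sub_right u v (aqcP v)
          linear_combination h1 - h3 + h2
        exact hLCD.subset hmem
      · rintro rfl
        exact ⟨hzero_fix, hzero_dual _⟩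
    · -- E_σ(C) is LCD
      unfold IsLCDSet
      ext u
      simp only [Set.mem_inter_iff, Set.mem_singleton_iff]
      constructor
      · rintro ⟨⟨huC, hu1, hu2⟩, hud⟩
        have hmem : u ∈ (C : Set _) ∩ dualSet (C : Set _) := by
          refine ⟨huC, fun v hv => ?_⟩
          have h1 : eInner u (aqcP v) = 0 := by
            rw [eInner_comm]
            exact aqc_orth (aqcShift_aqcP v) hu1 hu2
          have h2 : eInner u (v - aqcP v) = 0 := by
            refine hud _ ⟨C.sub_mem hv (aqcP_mem hmF C hC hv), ?_, ?_⟩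
            · exact aqcP_sub_even_inl hmF v
            · exact aqcP_sub_even_inr v
          have h3 := eInner_sub_right u v (aqcP v)
          linear_combination h1 - h3 + h2
        exact hLCD.subset hmem
      · rintro rfl
        exact ⟨hzero_even, hzero_dual _⟩
  · rintro ⟨hF, hE⟩
    unfold IsLCDSet
    ext u
    simp only [Set.mem_inter_iff, Set.mem_singleton_iff]
    constructor
    · rintro ⟨huC, hud⟩
      have hudual : ∀ v ∈ (C : Set _), eInner u v = 0 := hud
      -- step 1 : aqcP u = 0
      have hPu : aqcP u = 0 := by
        have hmemF : aqcP u ∈ aqcFixedCode C ∩ dualSet (aqcFixedCode C) := by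
          refine ⟨⟨aqcP_mem hmF C hC huC, aqcShift_aqcP u⟩, ?_⟩
          rintro v ⟨hvC, hvfix⟩
          have h1 : eInner u v = 0 := hudual v hvC
          have h2 : eInner (u - aqcP u) v = 0 := by
            rw [eInner_comm]
            exact aqc_orth hvfix (aqcP_sub_even_inl hmF u) (aqcP_sub_even_inr u)
          have h3 := eInner_sub_left u (aqcP u) v
          linear_combination h1 + h3 - h2
        exact hF.subset hmemF
      -- step 2 : u ∈ E_σ(C) ∩ dual
      have hmemE : u ∈ aqcEvenCode C ∩ dualSet (aqcEvenCode C) := by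
        constructor
        · refine ⟨huC, fun i => ?_, fun j => ?_⟩
          · have := aqcP_sub_even_inl hmF u i
            rw [hPu, sub_zero] at this
            exact this
          · have := aqcP_sub_even_inr u j
            rw [hPu, sub_zero] at this
            exact this
        · rintro v ⟨hvC, -, -⟩
          exact hudual v hvC
      exact hE.subset hmemE
    · rintro rfl
      exact ⟨C.zero_mem, hzero_dual _⟩
end
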